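/- Let n_1 ≥ 3 and n_2 ≥ 3 be integers. Then the cylinder C(n_1, n_2), i.e. the Cartesian product of the cycle C_{n_1} and the path P_{n_2}, contains two (0, n_1 − 2)-disjoint spanning trees. -/

import Mathlib

open SimpleGraph

variable {V : Type*}

/-- `T` is a spanning tree of `G`: a subgraph on all of `V` that is connected and acyclic. -/
def IsSpanningTree (G T : SimpleGraph V) : Prop :=
  T ≤ G ∧ T.Connected ∧ T.IsAcyclic

/-- The set of inner vertices of `T` (degree at least 2). -/
def innerSet (T : SimpleGraph V) : Set V :=
  {v | 2 ≤ (T.neighborSet v).ncard}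

/-- Vertices that are inner vertices of at least two trees of the family. -/
def innerMulti {k : ℕ} (T : Fin k → SimpleGraph V) : Set V :=
  {v | ∃ i j : Fin k, i ≠ j ∧ v ∈ innerSet (T i) ∧ v ∈ innerSet (T j)}

/-- Edges that belong to at least two trees of the family. -/
def edgeMulti {k : ℕ} (T : Fin k → SimpleGraph V) : Set (Sym2 V) :=
  {e | ∃ i j : Fin k, i ≠ j ∧ e ∈ (T i).edgeSet ∧ e ∈ (T j).edgeSet}

/-- A connected dominating set. -/
def IsConnDomSet (G : SimpleGraph V) (D : Set V) : Prop :=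
  (G.induce D).Connected ∧ ∀ v ∉ D, ∃ w ∈ D, G.Adj v w

namespace CylinderProof

open SimpleGraph

variable {W : Type*}

/-- Tree defined by a parent function. -/
def treeOf (root : W) (p : W → W) : SimpleGraph W where
  Adj u v := u ≠ v ∧ ((u ≠ root ∧ p u = v) ∨ (v ≠ root ∧ p v = u))
  symm := ⟨fun u v h => ⟨Ne.symm h.1, h.2.symm⟩⟩
  loopless := ⟨fun v h => h.1 rfl⟩

lemma treeOf_adj {root : W} {p : W → W} {u v : W} :
    (treeOf root p).Adj u v ↔ u ≠ v ∧ ((u ≠ root ∧ p u = v) ∨ (v ≠ root ∧ p v = u)) :=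
  Iff.rfl

lemma treeOf_connected (root : W) (p : W → W) (m : W → ℕ)
    (hm : ∀ v, v ≠ root → m (p v) < m v) : (treeOf root p).Connected := by
  have key : ∀ (N : ℕ) (v : W), m v < N → (treeOf root p).Reachable v root := by
    intro N
    induction N with
    | zero => intro v h; omega
    | succ n ih =>
      intro v h
      by_cases hv : v = root
      · subst hv; exact Reachable.refl _
      · have h1 := hm v hv
        have hadj : (treeOf root p).Adj v (p v) :=
          ⟨by intro he; rw [← he] at h1; omega, Or.inl ⟨hv, rfl⟩⟩
        exact hadj.reachable.trans (ih (p v) (by omega))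
  rw [connected_iff_exists_forall_reachable]
  exact ⟨root, fun w => (key (m w + 1) w (by omega)).symm⟩

lemma treeOf_isAcyclic (root : W) (p : W → W) (m : W → ℕ)
    (hm : ∀ v, v ≠ root → m (p v) < m v) : (treeOf root p).IsAcyclic := by
  intro w c hc
  classical
  obtain ⟨u, hu, hmax⟩ := Finset.exists_max_image c.support.toFinset m
      ⟨w, List.mem_toFinset.mpr c.start_mem_support⟩
  rw [List.mem_toFinset] at hu
  set c' := c.rotate u hu with hc'def
  have hcyc : c'.IsCycle := hc.rotate hu
  have hsupp : ∀ x, x ∈ c'.support → m x ≤ m u := by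
    intro x hx
    rw [c'.support_eq_cons] at hx
    rcases List.mem_cons.mp hx with rfl | hx
    · exact le_rfl
    · have hrot := SimpleGraph.Walk.support_rotate c u hu
      have hx' : x ∈ c.support.tail := hrot.mem_iff.mp hx
      exact hmax x (List.mem_toFinset.mpr (List.mem_of_mem_tail hx'))
  have hnn : ¬ c'.Nil := by
    rw [SimpleGraph.Walk.not_nil_iff_lt_length]
    have := hcyc.three_le_length; omega
  obtain ⟨a, ha, q, hq⟩ := SimpleGraph.Walk.not_nil_iff.mp hnn
  have hpu : u ≠ root ∧ p u = a := by
    rcases ha.2 with h | ⟨har, hpa⟩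
    · exact h
    · exfalso
      have hamem : a ∈ c'.support := by
        rw [hq, SimpleGraph.Walk.support_cons]
        exact List.mem_cons_of_mem _ q.start_mem_support
      have h1 := hm a har
      rw [hpa] at h1
      exact absurd (hsupp a hamem) (not_le.mpr h1)
  have hqnn : ¬ q.reverse.Nil := by
    rw [SimpleGraph.Walk.not_nil_iff_lt_length, SimpleGraph.Walk.length_reverse]
    have h3 := hcyc.three_le_length
    have h4 : c'.length = q.length + 1 := by rw [hq]; simp
    omega
  obtain ⟨b, hb, q2, hq2⟩ := SimpleGraph.Walk.not_nil_iff.mp hqnn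
  have hbq : b ∈ q.support := by
    have hb1 : b ∈ q.reverse.support := by
      rw [hq2, SimpleGraph.Walk.support_cons]
      exact List.mem_cons_of_mem _ q2.start_mem_support
    rwa [SimpleGraph.Walk.support_reverse, List.mem_reverse] at hb1
  have hbc : b ∈ c'.support := by
    rw [hq, SimpleGraph.Walk.support_cons]; exact List.mem_cons_of_mem _ hbq
  have hpub : p u = b := by
    rcases hb.2 with h | ⟨hbr, hpb⟩
    · exact h.2
    · exfalso
      have h1 := hm b hbr
      rw [hpb] at h1
      exact absurd (hsupp b hbc) (not_le.mpr h1)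
  have hab : a = b := (hpu.2.symm).trans hpub
  have hedge : s(u, b) ∈ q.edges := by
    have he1 : s(u, b) ∈ q.reverse.edges := by
      rw [hq2, SimpleGraph.Walk.edges_cons]
      exact List.mem_cons_self
    rwa [SimpleGraph.Walk.edges_reverse, List.mem_reverse] at he1
  have hnodup := hcyc.isCircuit.isTrail.edges_nodup
  rw [hq, SimpleGraph.Walk.edges_cons] at hnodup
  rw [← hab] at hedge
  exact (List.nodup_cons.mp hnodup).1 hedge

lemma not_inner_of_forall (root : W) (p : W → W) {v : W} (hv : ∀ u, p u ≠ v) :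
    v ∉ innerSet (treeOf root p) := by
  intro h
  have hsub : (treeOf root p).neighborSet v ⊆ {p v} := by
    intro u hu
    rcases hu.2 with ⟨_, h1⟩ | ⟨_, h2⟩
    · rw [← h1]; rfl
    · exact absurd h2 (hv u)
  have h1 := Set.ncard_le_ncard hsub (Set.finite_singleton _)
  rw [Set.ncard_singleton] at h1
  have h2 : 2 ≤ ((treeOf root p).neighborSet v).ncard := h
  omega

lemma exists_parent_of_inner (root : W) (p : W → W) {v : W}
    (h : v ∈ innerSet (treeOf root p)) : ∃ u, p u = v := by
  by_contra hc
  push_neg at hc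
  exact not_inner_of_forall root p hc h

section Cyl

variable {n₁ n₂ : ℕ}

/-- root of the first tree -/
def r1 (h₁ : 3 ≤ n₁) (h₂ : 3 ≤ n₂) : Fin n₁ × Fin n₂ := (⟨0, by omega⟩, ⟨0, by omega⟩)

/-- root of the second tree -/
def r2 (h₁ : 3 ≤ n₁) (h₂ : 3 ≤ n₂) : Fin n₁ × Fin n₂ := (⟨1, by omega⟩, ⟨0, by omega⟩)

/-- parent function of the first tree -/
def p1 (h₁ : 3 ≤ n₁) (h₂ : 3 ≤ n₂) (v : Fin n₁ × Fin n₂) : Fin n₁ × Fin n₂ :=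
  if v.1.val = 0 then
    (v.1, ⟨v.2.val - 1, by have := v.2.isLt; omega⟩)
  else if v.1.val = 1 then
    (if v.2.val % 2 = 0 then (⟨2, by omega⟩, v.2) else (⟨0, by omega⟩, v.2))
  else if v.2.val % 2 = 0 then
    (if h : v.1.val = n₁ - 1 then (⟨0, by omega⟩, v.2)
     else (⟨v.1.val + 1, by have := v.1.isLt; omega⟩, v.2))
  else (v.1, ⟨v.2.val - 1, by have := v.2.isLt; omega⟩)

/-- parent function of the second tree -/
def p2 (h₁ : 3 ≤ n₁) (h₂ : 3 ≤ n₂) (v : Fin n₁ × Fin n₂) : Fin n₁ × Fin n₂ :=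
  if v.1.val = 1 then
    (v.1, ⟨v.2.val - 1, by have := v.2.isLt; omega⟩)
  else if v.1.val = 0 then
    (if v.2.val % 2 = 0 then (⟨1, by omega⟩, v.2) else (⟨n₁ - 1, by omega⟩, v.2))
  else if v.2.val % 2 = 1 then
    (⟨v.1.val - 1, by have := v.1.isLt; omega⟩, v.2)
  else if v.2.val = 0 then (v.1, ⟨1, by omega⟩)
  else (v.1, ⟨v.2.val - 1, by have := v.2.isLt; omega⟩)

/-- measure for the first tree -/
def m1 (v : Fin n₁ × Fin n₂) : ℕ :=
  v.2.val * n₁ + (if v.1.val = 0 then 0 else if v.1.val = 1 then n₁ + 1 else n₁ + 1 - v.1.val)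

/-- measure for the second tree -/
def m2 (v : Fin n₁ × Fin n₂) : ℕ :=
  v.2.val * (2 * n₁) +
    (if v.1.val = 1 then 0
     else if v.1.val = 0 then (if v.2.val % 2 = 0 then 1 else n₁)
     else (if v.2.val = 0 then 2 * n₁ + v.1.val else v.1.val - 1))

lemma ne_r1_iff (h₁ : 3 ≤ n₁) (h₂ : 3 ≤ n₂) (v : Fin n₁ × Fin n₂) :
    v ≠ r1 h₁ h₂ ↔ ¬(v.1.val = 0 ∧ v.2.val = 0) := by
  rw [r1]
  constructor
  · intro h hc
    exact h (Prod.ext_iff.mpr ⟨Fin.ext hc.1, Fin.ext hc.2⟩)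
  · intro h hc
    subst hc
    exact h ⟨rfl, rfl⟩

lemma ne_r2_iff (h₁ : 3 ≤ n₁) (h₂ : 3 ≤ n₂) (v : Fin n₁ × Fin n₂) :
    v ≠ r2 h₁ h₂ ↔ ¬(v.1.val = 1 ∧ v.2.val = 0) := by
  rw [r2]
  constructor
  · intro h hc
    exact h (Prod.ext_iff.mpr ⟨Fin.ext hc.1, Fin.ext hc.2⟩)
  · intro h hc
    subst hc
    exact h ⟨rfl, rfl⟩

lemma m1_lt (h₁ : 3 ≤ n₁) (h₂ : 3 ≤ n₂) (v : Fin n₁ × Fin n₂) (hv : v ≠ r1 h₁ h₂) :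
    m1 (p1 h₁ h₂ v) < m1 v := by
  rw [ne_r1_iff] at hv
  obtain ⟨⟨i, hi⟩, ⟨j, hj⟩⟩ := v
  have e1 : (j - 1) * n₁ + n₁ = j * n₁ ∨ (j = 0 ∧ (j - 1) * n₁ = j * n₁) := by
    rcases Nat.eq_zero_or_pos j with rfl | hjpos
    · right; simp
    · left
      have hj1 : j - 1 + 1 = j := by omega
      calc (j - 1) * n₁ + n₁ = (j - 1 + 1) * n₁ := by ring
        _ = j * n₁ := by rw [hj1]
  simp only [p1, m1] at *
  try dsimp only at *
  split_ifs at * <;> dsimp only at * <;> omega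

lemma m2_lt (h₁ : 3 ≤ n₁) (h₂ : 3 ≤ n₂) (v : Fin n₁ × Fin n₂) (hv : v ≠ r2 h₁ h₂) :
    m2 (p2 h₁ h₂ v) < m2 v := by
  rw [ne_r2_iff] at hv
  obtain ⟨⟨i, hi⟩, ⟨j, hj⟩⟩ := v
  have e1 : (j - 1) * (2 * n₁) + 2 * n₁ = j * (2 * n₁) ∨
      (j = 0 ∧ j * (2 * n₁) = 0 ∧ (j - 1) * (2 * n₁) = 0) := by
    rcases Nat.eq_zero_or_pos j with rfl | hjpos
    · right; simp
    · left
      have hj1 : j - 1 + 1 = j := by omega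
      calc (j - 1) * (2 * n₁) + 2 * n₁ = (j - 1 + 1) * (2 * n₁) := by ring
        _ = j * (2 * n₁) := by rw [hj1]
  simp only [p2, m2] at *
  try dsimp only at *
  split_ifs at * <;> dsimp only at * <;> omega

lemma cycle_adj (h₁ : 3 ≤ n₁) {a b : Fin n₁}
    (h : b.val = a.val + 1 ∨ a.val = b.val + 1 ∨ (a.val = 0 ∧ b.val = n₁ - 1) ∨
      (b.val = 0 ∧ a.val = n₁ - 1)) :
    (SimpleGraph.cycleGraph n₁).Adj a b := by
  have ha := a.isLt
  have hb := b.isLt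
  have key : ∀ z : ℕ, z = n₁ + 1 ∨ z = 1 → z % n₁ = 1 := by
    intro z hz
    rcases hz with rfl | rfl
    · rw [Nat.add_mod_left]
      exact Nat.mod_eq_of_lt (by omega)
    · exact Nat.mod_eq_of_lt (by omega)
  rw [SimpleGraph.cycleGraph_adj']
  rcases h with h | h | ⟨h1, h2⟩ | ⟨h1, h2⟩
  · right
    rw [Fin.sub_def]
    exact key _ (by omega)
  · left
    rw [Fin.sub_def]
    exact key _ (by omega)
  · left
    rw [Fin.sub_def]
    exact key _ (by omega)
  · right
    rw [Fin.sub_def]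
    exact key _ (by omega)

lemma p1_adj (h₁ : 3 ≤ n₁) (h₂ : 3 ≤ n₂) (v : Fin n₁ × Fin n₂) (hv : v ≠ r1 h₁ h₂) :
    (SimpleGraph.cycleGraph n₁ □ SimpleGraph.pathGraph n₂).Adj v (p1 h₁ h₂ v) := by
  rw [ne_r1_iff] at hv
  obtain ⟨⟨i, hi⟩, ⟨j, hj⟩⟩ := v
  rw [SimpleGraph.boxProd_adj]
  simp only [p1] at *
  try dsimp only at *
  split_ifs at * <;> dsimp only
  · -- i = 0 : vertical step down
    right
    refine ⟨?_, rfl⟩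
    rw [SimpleGraph.pathGraph_adj]
    dsimp only
    omega
  · -- i = 1, j even : to (2, j)
    left
    refine ⟨cycle_adj h₁ ?_, rfl⟩
    dsimp only
    omega
  · -- i = 1, j odd : to (0, j)
    left
    refine ⟨cycle_adj h₁ ?_, rfl⟩
    dsimp only
    omega
  · -- i = n₁-1, j even : wrap to 0
    left
    refine ⟨cycle_adj h₁ ?_, rfl⟩
    dsimp only
    omega
  · -- i ≥ 2 not last, j even : to (i+1, j)
    left
    refine ⟨cycle_adj h₁ ?_, rfl⟩
    dsimp only
    omega
  · -- i ≥ 2, j odd : vertical step down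
    right
    refine ⟨?_, rfl⟩
    rw [SimpleGraph.pathGraph_adj]
    dsimp only
    omega

lemma p2_adj (h₁ : 3 ≤ n₁) (h₂ : 3 ≤ n₂) (v : Fin n₁ × Fin n₂) (hv : v ≠ r2 h₁ h₂) :
    (SimpleGraph.cycleGraph n₁ □ SimpleGraph.pathGraph n₂).Adj v (p2 h₁ h₂ v) := by
  rw [ne_r2_iff] at hv
  obtain ⟨⟨i, hi⟩, ⟨j, hj⟩⟩ := v
  rw [SimpleGraph.boxProd_adj]
  simp only [p2] at *
  try dsimp only at *
  split_ifs at * <;> dsimp only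
  · -- i = 1 : vertical step down
    right
    refine ⟨?_, rfl⟩
    rw [SimpleGraph.pathGraph_adj]
    dsimp only
    omega
  · -- i = 0, j even : to (1, j)
    left
    refine ⟨cycle_adj h₁ ?_, rfl⟩
    dsimp only
    omega
  · -- i = 0, j odd : to (n₁-1, j)
    left
    refine ⟨cycle_adj h₁ ?_, rfl⟩
    dsimp only
    omega
  · -- i ≥ 2, j odd : to (i-1, j)
    left
    refine ⟨cycle_adj h₁ ?_, rfl⟩
    dsimp only
    omega
  · -- i ≥ 2, j = 0 : vertical step up
    right
    refine ⟨?_, rfl⟩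
    rw [SimpleGraph.pathGraph_adj]
    dsimp only
    omega
  · -- i ≥ 2, j even ≥ 2 : vertical step down
    right
    refine ⟨?_, rfl⟩
    rw [SimpleGraph.pathGraph_adj]
    dsimp only
    omega

lemma p1_memA (h₁ : 3 ≤ n₁) (h₂ : 3 ≤ n₂) (v : Fin n₁ × Fin n₂) :
    (p1 h₁ h₂ v).1.val = 0 ∨ (2 ≤ (p1 h₁ h₂ v).1.val ∧ (p1 h₁ h₂ v).2.val % 2 = 0) := by
  obtain ⟨⟨i, hi⟩, ⟨j, hj⟩⟩ := v
  simp only [p1]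
  try dsimp only
  split_ifs <;> (try dsimp only) <;> omega

lemma p2_memB (h₁ : 3 ≤ n₁) (h₂ : 3 ≤ n₂) (v : Fin n₁ × Fin n₂) :
    (p2 h₁ h₂ v).1.val = 1 ∨ (2 ≤ (p2 h₁ h₂ v).1.val ∧ (p2 h₁ h₂ v).2.val % 2 = 1) := by
  obtain ⟨⟨i, hi⟩, ⟨j, hj⟩⟩ := v
  simp only [p2]
  try dsimp only
  split_ifs <;> (try dsimp only) <;> omega

lemma p1_ne_p2 (h₁ : 3 ≤ n₁) (h₂ : 3 ≤ n₂) (v : Fin n₁ × Fin n₂) :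
    p1 h₁ h₂ v ≠ p2 h₁ h₂ v := by
  obtain ⟨⟨i, hi⟩, ⟨j, hj⟩⟩ := v
  simp only [p1, p2, Ne, Prod.ext_iff, Fin.ext_iff]
  try dsimp only
  split_ifs <;> (try dsimp only) <;> omega

lemma key_lemma (h₁ : 3 ≤ n₁) (h₂ : 3 ≤ n₂) (x y : Fin n₁ × Fin n₂)
    (hxy : p1 h₁ h₂ x = y) (hyx : p2 h₁ h₂ y = x) :
    2 ≤ x.1.val ∧ x.1.val = y.1.val ∧ x.2.val = 1 ∧ y.2.val = 0 := by
  obtain ⟨⟨i, hi⟩, ⟨j, hj⟩⟩ := x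
  obtain ⟨⟨k, hk⟩, ⟨l, hl⟩⟩ := y
  simp only [p1, p2, Prod.ext_iff, Fin.ext_iff] at *
  try dsimp only at *
  split_ifs at * <;> dsimp only at * <;> omega

end Cyl

end CylinderProof

open CylinderProof in
/-- The cylinder `C(n₁, n₂) = C_{n₁} □ P_{n₂}` contains two (0, n₁ - 2)-disjoint
spanning trees. -/
theorem cylinder_two_disjoint_trees (n₁ n₂ : ℕ) (h₁ : 3 ≤ n₁) (h₂ : 3 ≤ n₂) :
    ∃ T₁ T₂ : SimpleGraph (Fin n₁ × Fin n₂),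
      IsSpanningTree (SimpleGraph.cycleGraph n₁ □ SimpleGraph.pathGraph n₂) T₁ ∧
      IsSpanningTree (SimpleGraph.cycleGraph n₁ □ SimpleGraph.pathGraph n₂) T₂ ∧
      Disjoint (innerSet T₁) (innerSet T₂) ∧
      (T₁.edgeSet ∩ T₂.edgeSet).ncard ≤ n₁ - 2 := by
  classical
  refine ⟨treeOf (r1 h₁ h₂) (p1 h₁ h₂), treeOf (r2 h₁ h₂) (p2 h₁ h₂), ?_, ?_, ?_, ?_⟩
  · refine ⟨?_, ?_, ?_⟩
    · intro x y hxy
      rcases hxy.2 with ⟨hx, he⟩ | ⟨hy, he⟩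
      · exact he ▸ p1_adj h₁ h₂ x hx
      · exact (he ▸ p1_adj h₁ h₂ y hy).symm
    · exact treeOf_connected _ _ m1 (m1_lt h₁ h₂)
    · exact treeOf_isAcyclic _ _ m1 (m1_lt h₁ h₂)
  · refine ⟨?_, ?_, ?_⟩
    · intro x y hxy
      rcases hxy.2 with ⟨hx, he⟩ | ⟨hy, he⟩
      · exact he ▸ p2_adj h₁ h₂ x hx
      · exact (he ▸ p2_adj h₁ h₂ y hy).symm
    · exact treeOf_connected _ _ m2 (m2_lt h₁ h₂)
    · exact treeOf_isAcyclic _ _ m2 (m2_lt h₁ h₂)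
  · rw [Set.disjoint_left]
    intro v hv1 hv2
    obtain ⟨u, hu⟩ := exists_parent_of_inner _ _ hv1
    obtain ⟨w, hw⟩ := exists_parent_of_inner _ _ hv2
    have hA := p1_memA h₁ h₂ u
    have hB := p2_memB h₁ h₂ w
    rw [hu] at hA
    rw [hw] at hB
    omega
  · have hsub : (treeOf (r1 h₁ h₂) (p1 h₁ h₂)).edgeSet ∩
        (treeOf (r2 h₁ h₂) (p2 h₁ h₂)).edgeSet ⊆
        (fun k : Fin (n₁ - 2) =>
          s(((⟨k.val + 2, by have := k.isLt; omega⟩ : Fin n₁), (⟨1, by omega⟩ : Fin n₂)),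
            ((⟨k.val + 2, by have := k.isLt; omega⟩ : Fin n₁), (⟨0, by omega⟩ : Fin n₂))))
          '' Set.univ := by
      intro e
      induction e using Sym2.ind with
      | _ x y =>
        rintro ⟨he1, he2⟩
        rw [SimpleGraph.mem_edgeSet, treeOf_adj] at he1 he2
        rcases he1.2 with ⟨hx1, hp⟩ | ⟨hy1, hp⟩ <;> rcases he2.2 with ⟨hx2, hq⟩ | ⟨hy2, hq⟩
        · exact absurd (hp.trans hq.symm) (p1_ne_p2 h₁ h₂ x)
        · obtain ⟨hge, hieq, hx2v, hy2v⟩ := key_lemma h₁ h₂ x y hp hq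
          refine ⟨⟨x.1.val - 2, by have := x.1.isLt; omega⟩, Set.mem_univ _, ?_⟩
          rw [Sym2.eq_iff]
          left
          simp only [Prod.ext_iff, Fin.ext_iff]
          refine ⟨⟨?_, ?_⟩, ⟨?_, ?_⟩⟩ <;> omega
        · obtain ⟨hge, hieq, hx2v, hy2v⟩ := key_lemma h₁ h₂ y x hp hq
          refine ⟨⟨y.1.val - 2, by have := y.1.isLt; omega⟩, Set.mem_univ _, ?_⟩
          rw [Sym2.eq_iff]
          right
          simp only [Prod.ext_iff, Fin.ext_iff]
          refine ⟨⟨?_, ?_⟩, ⟨?_, ?_⟩⟩ <;> omega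
        · exact absurd (hp.trans hq.symm) (p1_ne_p2 h₁ h₂ y)
    calc ((treeOf (r1 h₁ h₂) (p1 h₁ h₂)).edgeSet ∩
        (treeOf (r2 h₁ h₂) (p2 h₁ h₂)).edgeSet).ncard
        ≤ _ := Set.ncard_le_ncard hsub (Set.toFinite _)
      _ ≤ (Set.univ : Set (Fin (n₁ - 2))).ncard := Set.ncard_image_le (Set.toFinite _)
      _ = n₁ - 2 := by rw [Set.ncard_univ, Nat.card_eq_fintype_card, Fintype.card_fin]
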